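/- Any election with at most 3 candidates is 2-Euclidean. More specifically, placing the three candidates at the vertices of a non-degenerate (non-equilateral, scalene) triangle yields an embedding in which all 6 regions corresponding to the 6 linear orders of the candidates are nonempty. -/

import Mathlib

noncomputable section

abbrev Plane : Type := EuclideanSpace ℝ (Fin 2)

/-- An election is 2-Euclidean. -/
def IsEuclidean2 {C V : Type*} (pref : V → C → C → Prop) : Prop :=
  ∃ γ : C ⊕ V → Plane, Function.Injective γ ∧
    ∀ (v : V) (a b : C), pref v a b →
      dist (γ (Sum.inr v)) (γ (Sum.inl a)) < dist (γ (Sum.inr v)) (γ (Sum.inl b))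

/-- The region of a ranking `σ` of the candidates. -/
def region {C : Type*} {m : ℕ} (γ : C → Plane) (σ : C ≃ Fin m) : Set Plane :=
  {p : Plane | ∀ a b : C, σ a < σ b → dist p (γ a) < dist p (γ b)}

section Helpers
open RealInnerProductSpace

lemma dist_lt_dist_iff' (p a b : Plane) :
    dist p a < dist p b ↔ 2 * ⟪p, b - a⟫ < ‖b‖^2 - ‖a‖^2 := by
  rw [dist_eq_norm, dist_eq_norm,
    ← pow_lt_pow_iff_left₀ (norm_nonneg (p - a)) (norm_nonneg (p - b)) (two_ne_zero),
    norm_sub_sq_real, norm_sub_sq_real, inner_sub_right]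
  constructor <;> intro h <;> nlinarith [h]

lemma exists_inner_eq {u v : Plane} (h : LinearIndependent ℝ ![u, v]) (s t : ℝ) :
    ∃ p : Plane, ⟪p, u⟫ = s ∧ ⟪p, v⟫ = t := by
  let L : Plane →ₗ[ℝ] ℝ × ℝ :=
    { toFun := fun p => (⟪p, u⟫, ⟪p, v⟫)
      map_add' := by intros; simp [inner_add_left]
      map_smul' := by intros; simp [real_inner_smul_left]
      }
  have hinj : Function.Injective L := by
    rw [← LinearMap.ker_eq_bot, Submodule.eq_bot_iff]
    intro p hp
    simp only [LinearMap.mem_ker, Prod.mk_eq_zero, L, LinearMap.coe_mk, AddHom.coe_mk] at hp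
    have hsp : Submodule.span ℝ (Set.range ![u, v]) = ⊤ :=
      h.span_eq_top_of_card_eq_finrank (by simp)
    have hperp : p ∈ (Submodule.span ℝ (Set.range ![u, v]))ᗮ := by
      rw [Submodule.mem_orthogonal]
      intro x hx
      induction hx using Submodule.span_induction with
      | mem x hx =>
        obtain ⟨i, rfl⟩ := hx
        fin_cases i
        · rw [real_inner_comm]; simpa using hp.1
        · rw [real_inner_comm]; simpa using hp.2
      | zero => simp
      | add x y _ _ h1 h2 => rw [inner_add_left, h1, h2, add_zero]
      | smul c x _ h1 => rw [inner_smul_left, h1, mul_zero]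
    rw [hsp, Submodule.top_orthogonal_eq_bot] at hperp
    simpa using hperp
  have hsurj : Function.Surjective L :=
    (LinearMap.injective_iff_surjective_of_finrank_eq_finrank (by simp)).mp hinj
  obtain ⟨p, hp⟩ := hsurj (s, t)
  exact ⟨p, congrArg Prod.fst hp, congrArg Prod.snd hp⟩

lemma linIndep_of_not_collinear {A B C : Plane}
    (h : ¬ Collinear ℝ ({A, B, C} : Set Plane)) :
    LinearIndependent ℝ ![B - A, C - B] := by
  by_contra hdep
  rw [linearIndependent_fin2] at hdep
  push_neg at hdep
  simp only [Matrix.cons_val_one, Matrix.head_cons, Matrix.cons_val_zero] at hdep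
  apply h
  by_cases hCB : C - B = 0
  · have : C = B := by rwa [sub_eq_zero] at hCB
    subst this
    have : ({A, C, C} : Set Plane) = {A, C} := by simp
    rw [this]
    exact collinear_pair ℝ A C
  · obtain ⟨a, ha⟩ := hdep hCB
    rw [collinear_iff_of_mem (Set.mem_insert A _)]
    refine ⟨C - B, ?_⟩
    intro p hp
    rcases hp with rfl | rfl | rfl
    · exact ⟨0, by simp⟩
    · exact ⟨a, by rw [ha]; simp⟩
    · exact ⟨a + 1, by rw [add_smul, ha, one_smul]; simp⟩

/-- the set of points whose distances to A, B, C are in increasing order is infinite -/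
lemma sandwich_infinite {A B C : Plane}
    (h : LinearIndependent ℝ ![B - A, C - B]) :
    {p : Plane | dist p A < dist p B ∧ dist p B < dist p C}.Infinite := by
  have key : ∀ t : ℝ, ∃ p : Plane,
      ⟪p, B - A⟫ = (‖B‖^2 - ‖A‖^2)/2 - t ∧ ⟪p, C - B⟫ = (‖C‖^2 - ‖B‖^2)/2 - t :=
    fun t => exists_inner_eq h _ _
  choose f hf1 hf2 using key
  apply Set.infinite_of_injOn_mapsTo (s := Set.Ioi (0:ℝ)) (f := f)
  · intro x hx y hy hxy
    have := hf1 x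
    rw [hxy, hf1 y] at this
    linarith [this]
  · intro t ht
    simp only [Set.mem_Ioi] at ht
    constructor
    · rw [dist_lt_dist_iff']
      rw [hf1 t]; linarith
    · rw [dist_lt_dist_iff']
      rw [hf2 t]; linarith
  · exact Set.Ioi_infinite 0

lemma halfplane_infinite {A B : Plane} (h : A ≠ B) :
    {p : Plane | dist p A < dist p B}.Infinite := by
  have hBA : B - A ≠ 0 := sub_ne_zero_of_ne (Ne.symm h)
  have key : ∀ t : ℝ, ∃ p : Plane, ⟪p, B - A⟫ = (‖B‖^2 - ‖A‖^2)/2 - t := by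
    intro t
    refine ⟨(((‖B‖^2 - ‖A‖^2)/2 - t) / ‖B - A‖^2) • (B - A), ?_⟩
    have hn : ‖B - A‖^2 ≠ 0 := by
      simpa using hBA
    rw [real_inner_smul_left, real_inner_self_eq_norm_sq, div_mul_cancel₀ _ hn]
  choose f hf using key
  apply Set.infinite_of_injOn_mapsTo (s := Set.Ioi (0:ℝ)) (f := f)
  · intro x hx y hy hxy
    have := hf x
    rw [hxy, hf y] at this
    linarith [this]
  · intro t ht
    simp only [Set.mem_Ioi] at ht
    rw [Set.mem_setOf_eq, dist_lt_dist_iff', hf t]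
    linarith
  · exact Set.Ioi_infinite 0

lemma choose_distinct {V : Type*} (S : V → Set Plane) (hS : ∀ v, (S v).Infinite)
    (F : Set Plane) (hF : F.Finite) (s : Finset V) [DecidableEq V] :
    ∃ f : V → Plane, Set.InjOn f s ∧ ∀ v ∈ s, f v ∈ S v ∧ f v ∉ F := by
  induction s using Finset.induction_on with
  | empty => exact ⟨fun _ => 0, by simp, by simp⟩
  | @insert a s' ha ih =>
    obtain ⟨f, hfinj, hfmem⟩ := ih
    have hbad : (F ∪ f '' (s' : Set V)).Finite := hF.union (s'.finite_toSet.image f)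
    obtain ⟨x, hx⟩ := ((hS a).diff hbad).nonempty
    refine ⟨Function.update f a x, ?_, ?_⟩
    · intro u hu w hw huw
      simp only [Finset.coe_insert, Set.mem_insert_iff] at hu hw
      rcases hu with rfl | hu <;> rcases hw with rfl | hw
      · rfl
      · exfalso
        rw [Function.update_self, Function.update_of_ne (by rintro rfl; exact ha hw)] at huw
        exact hx.2 (Set.mem_union_right _ ⟨w, hw, huw.symm⟩)
      · exfalso
        rw [Function.update_self, Function.update_of_ne (by rintro rfl; exact ha hu)] at huw
        exact hx.2 (Set.mem_union_right _ ⟨u, hu, huw⟩)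
      · rw [Function.update_of_ne (by rintro rfl; exact ha hu),
          Function.update_of_ne (by rintro rfl; exact ha hw)] at huw
        exact hfinj hu hw huw
    · intro v hv
      rcases Finset.mem_insert.mp hv with rfl | hv2
      · rw [Function.update_self]
        exact ⟨hx.1, fun hmem => hx.2 (Set.mem_union_left _ hmem)⟩
      · rw [Function.update_of_ne (by intro h; subst h; exact ha hv2)]
        exact hfmem v hv2

lemma fin3_cases : ∀ i j : Fin 3, i < j →
    (i = 0 ∧ j = 1) ∨ (i = 1 ∧ j = 2) ∨ (i = 0 ∧ j = 2) := by decide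

instance : Infinite Plane :=
  Infinite.of_injective (fun t : ℝ => t • EuclideanSpace.single 0 1) (by
    intro s t h
    have := congrArg (fun x : Plane => x 0) h
    simpa [EuclideanSpace.single_apply] using this)

def E0 : Plane := EuclideanSpace.single 0 1
def E1 : Plane := EuclideanSpace.single 1 1

lemma E0_ne_zero : E0 ≠ 0 := by
  intro h
  have := congrArg (fun x : Plane => x 0) h
  simp [E0, EuclideanSpace.single_apply] at this

lemma E1_ne_zero : E1 ≠ 0 := by
  intro h
  have := congrArg (fun x : Plane => x 1) h
  simp [E1, EuclideanSpace.single_apply] at this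

lemma E0_ne_E1 : E0 ≠ E1 := by
  intro h
  have := congrArg (fun x : Plane => x 0) h
  simp [E0, E1, EuclideanSpace.single_apply] at this

lemma not_collinear_triangle : ¬ Collinear ℝ ({0, E0, E1} : Set Plane) := by
  intro h
  rw [collinear_iff_of_mem (Set.mem_insert _ _)] at h
  obtain ⟨v, hv⟩ := h
  obtain ⟨r, hr⟩ := hv E0 (by simp)
  obtain ⟨s, hs⟩ := hv E1 (by simp)
  simp only [vadd_eq_add, add_zero] at hr hs
  have h1 : (1:ℝ) = r * v 0 := by
    have := congrArg (fun x : Plane => x 0) hr; simpa [E0, EuclideanSpace.single_apply] using this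
  have h2 : (0:ℝ) = r * v 1 := by
    have := congrArg (fun x : Plane => x 1) hr; simpa [E0, EuclideanSpace.single_apply] using this
  have h3 : (0:ℝ) = s * v 0 := by
    have := congrArg (fun x : Plane => x 0) hs; simpa [E1, EuclideanSpace.single_apply] using this
  have h4 : (1:ℝ) = s * v 1 := by
    have := congrArg (fun x : Plane => x 1) hs; simpa [E1, EuclideanSpace.single_apply] using this
  have : (1:ℝ) = 0 := by nlinarith [h1, h2, h3, h4]
  norm_num at this

lemma range_eq_triple {C : Type*} [Fintype C] (hc : Fintype.card C = 3)
    (γ : C → Plane) {a b c : C} (hab : a ≠ b) (hac : a ≠ c) (hbc : b ≠ c) :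
    Set.range γ = ({γ a, γ b, γ c} : Set Plane) := by
  classical
  have huniv : ({a, b, c} : Finset C) = Finset.univ := by
    apply Finset.eq_univ_of_card
    rw [hc, Finset.card_insert_of_notMem (by simp [hab, hac]),
      Finset.card_insert_of_notMem (by simp [hbc]), Finset.card_singleton]
  ext x
  constructor
  · rintro ⟨y, rfl⟩
    have : y ∈ ({a, b, c} : Finset C) := huniv ▸ Finset.mem_univ y
    simp only [Finset.mem_insert, Finset.mem_singleton] at this
    rcases this with rfl | rfl | rfl <;> simp
  · rintro (rfl | rfl | rfl) <;> exact Set.mem_range_self _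

lemma linIndep_of_range {C : Type*} [Fintype C] (hc : Fintype.card C = 3)
    (γ : C → Plane) (hcol : ¬ Collinear ℝ (Set.range γ))
    {a b c : C} (hab : a ≠ b) (hac : a ≠ c) (hbc : b ≠ c) :
    LinearIndependent ℝ ![γ b - γ a, γ c - γ b] := by
  apply linIndep_of_not_collinear
  rw [← range_eq_triple hc γ hab hac hbc]
  exact hcol

lemma isEuclidean2_of_embedding {C V : Type*} [Fintype C] [Fintype V]
    (pref : V → C → C → Prop)
    (γc : C → Plane) (hγc : Function.Injective γc)
    (hreg : ∀ v : V, {p : Plane | ∀ a b : C, pref v a b → dist p (γc a) < dist p (γc b)}.Infinite) :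
    IsEuclidean2 pref := by
  classical
  obtain ⟨f, hfinj, hf⟩ :=
    choose_distinct _ hreg (Set.range γc) (Set.finite_range γc) Finset.univ
  refine ⟨Sum.elim γc f, ?_, ?_⟩
  · intro x y hxy
    cases x with
    | inl cx =>
      cases y with
      | inl cy => exact congrArg Sum.inl (hγc hxy)
      | inr vy => exact (((hf vy (Finset.mem_univ _)).2) ⟨cx, hxy⟩).elim
    | inr vx =>
      cases y with
      | inl cy => exact (((hf vx (Finset.mem_univ _)).2) ⟨cy, hxy.symm⟩).elim
      | inr vy => exact congrArg Sum.inr (hfinj (by simp) (by simp) hxy)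
  · intro v a b hab
    exact (hf v (Finset.mem_univ _)).1 a b hab

lemma region_nonempty_main {C : Type*} [Fintype C] (h3 : Fintype.card C = 3)
    (γ : C → Plane) (hcol : ¬ Collinear ℝ (Set.range γ)) (σ : C ≃ Fin 3) :
    (region γ σ).Nonempty := by
  have h01 : σ.symm 0 ≠ σ.symm 1 := fun h => by simpa using σ.symm.injective h
  have h02 : σ.symm 0 ≠ σ.symm 2 := fun h => by simpa using σ.symm.injective h
  have h12 : σ.symm 1 ≠ σ.symm 2 := fun h => by simpa using σ.symm.injective h
  have hli := linIndep_of_range h3 γ hcol h01 h02 h12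
  obtain ⟨p, hp⟩ := (sandwich_infinite hli).nonempty
  refine ⟨p, ?_⟩
  intro x y hxy
  have hx : x = σ.symm (σ x) := (σ.symm_apply_apply x).symm
  have hy : y = σ.symm (σ y) := (σ.symm_apply_apply y).symm
  rcases fin3_cases _ _ hxy with ⟨h1, h2⟩ | ⟨h1, h2⟩ | ⟨h1, h2⟩
  · rw [hx, hy, h1, h2]; exact hp.1
  · rw [hx, hy, h1, h2]; exact hp.2
  · rw [hx, hy, h1, h2]; exact hp.1.trans hp.2

lemma part1 {C V : Type*} [Fintype C] [Fintype V]
    (pref : V → C → C → Prop) (hord : ∀ v : V, IsStrictTotalOrder C (pref v))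
    (hcard : Fintype.card C ≤ 3) : IsEuclidean2 pref := by
  classical
  have h4 : Fintype.card C = 0 ∨ Fintype.card C = 1 ∨ Fintype.card C = 2 ∨
      Fintype.card C = 3 := by omega
  rcases h4 with h0 | h1 | h2 | h3
  · -- no candidates
    have hE : IsEmpty C := Fintype.card_eq_zero_iff.mp h0
    apply isEuclidean2_of_embedding pref (fun c => isEmptyElim c) (fun c => isEmptyElim c)
    intro v
    have : {p : Plane | ∀ a b : C, pref v a b →
        dist p (isEmptyElim a) < dist p (isEmptyElim b)} = Set.univ :=
      Set.eq_univ_of_forall (fun p a => isEmptyElim a)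
    rw [this]
    exact Set.infinite_univ
  · -- one candidate
    have hs : Subsingleton C := Fintype.card_le_one_iff_subsingleton.mp (by omega)
    apply isEuclidean2_of_embedding pref (fun _ => (0 : Plane))
      (fun x y _ => Subsingleton.elim x y)
    intro v
    haveI := hord v
    have : {p : Plane | ∀ a b : C, pref v a b → dist p 0 < dist p 0} = Set.univ := by
      apply Set.eq_univ_of_forall
      intro p a b hab
      have hba : b = a := Subsingleton.elim b a
      rw [hba] at hab
      exact (irrefl_of (pref v) a hab).elim
    rw [this]
    exact Set.infinite_univ
  · -- two candidates
    let e := Fintype.equivFinOfCardEq h2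
    let T : Fin 2 → Plane := ![0, E0]
    have hTinj : Function.Injective T := by
      intro i j hij
      fin_cases i <;> fin_cases j <;> simp_all [T]
      · exact (E0_ne_zero hij.symm).elim
      · exact (E0_ne_zero hij).elim
    apply isEuclidean2_of_embedding pref (T ∘ e) (hTinj.comp e.injective)
    intro v
    haveI := hord v
    set a0 := e.symm 0 with ha0
    set a1 := e.symm 1 with ha1
    have ha01 : a0 ≠ a1 := fun h => by simpa using e.symm.injective h
    have hall : ∀ z : C, z = a0 ∨ z = a1 := by
      intro z
      have hz : e z = 0 ∨ e z = 1 := by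
        have := (e z).isLt
        rcases Nat.lt_succ_iff_lt_or_eq.mp this with h | h
        · left; exact Fin.ext (by omega)
        · right; exact Fin.ext (by simpa using h)
      rcases hz with h | h
      · left; rw [ha0, ← h, Equiv.symm_apply_apply]
      · right; rw [ha1, ← h, Equiv.symm_apply_apply]
    have key : ∀ x y : C, pref v x y →
        (x = a0 ∧ y = a1) ∨ (x = a1 ∧ y = a0) := by
      intro x y hxy
      have hne : x ≠ y := fun h => irrefl_of (pref v) x (h ▸ hxy)
      rcases hall x with rfl | rfl <;> rcases hall y with rfl | rfl
      · exact (hne rfl).elim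
      · exact Or.inl ⟨rfl, rfl⟩
      · exact Or.inr ⟨rfl, rfl⟩
      · exact (hne rfl).elim
    rcases trichotomous_of (pref v) a0 a1 with h01 | heq | h10
    · apply Set.Infinite.mono _ (halfplane_infinite
        (show (T ∘ e) a0 ≠ (T ∘ e) a1 from fun h => ha01 (hTinj.comp e.injective h)))
      intro p hp x y hxy
      rcases key x y hxy with ⟨rfl, rfl⟩ | ⟨rfl, rfl⟩
      · exact hp
      · exact (asymm_of (pref v) h01 hxy).elim
    · exact (ha01 heq).elim
    · apply Set.Infinite.mono _ (halfplane_infinite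
        (show (T ∘ e) a1 ≠ (T ∘ e) a0 from fun h => ha01 (hTinj.comp e.injective h).symm))
      intro p hp x y hxy
      rcases key x y hxy with ⟨rfl, rfl⟩ | ⟨rfl, rfl⟩
      · exact (asymm_of (pref v) h10 hxy).elim
      · exact hp
  · -- three candidates
    let e := Fintype.equivFinOfCardEq h3
    let T : Fin 3 → Plane := ![0, E0, E1]
    have hTinj : Function.Injective T := by
      intro i j hij
      fin_cases i <;> fin_cases j <;> simp_all [T]
      · exact (E0_ne_zero hij.symm).elim
      · exact (E1_ne_zero hij.symm).elim
      · exact (E0_ne_zero hij).elim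
      · exact (E0_ne_E1 hij).elim
      · exact (E1_ne_zero hij).elim
      · exact (E0_ne_E1 hij.symm).elim
    have hγinj : Function.Injective (T ∘ e) := hTinj.comp e.injective
    have hrange : Set.range (T ∘ e) = ({0, E0, E1} : Set Plane) := by
      rw [Set.range_comp, Equiv.range_eq_univ, Set.image_univ,
        Matrix.range_cons, Matrix.range_cons, Matrix.range_cons, Matrix.range_empty]
      ext x; simp; tauto
    have hcol : ¬ Collinear ℝ (Set.range (T ∘ e)) := by
      rw [hrange]; exact not_collinear_triangle
    apply isEuclidean2_of_embedding pref (T ∘ e) hγinj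
    intro v
    haveI := hord v
    haveI : DecidableRel (pref v) := Classical.decRel _
    letI lo : LinearOrder C := linearOrderOfSTO (pref v)
    let m := monoEquivOfFin C h3
    have hab : m 0 ≠ m 1 := fun h => by simpa using (EquivLike.injective m) h
    have hac : m 0 ≠ m 2 := fun h => by simpa using (EquivLike.injective m) h
    have hbc : m 1 ≠ m 2 := fun h => by simpa using (EquivLike.injective m) h
    have hli := linIndep_of_range h3 (T ∘ e) hcol hab hac hbc
    apply Set.Infinite.mono _ (sandwich_infinite hli)
    intro p hp x y hxy
    have hlt : m.symm x < m.symm y := by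
      rw [OrderIso.lt_iff_lt]
      exact hxy
    have hx : x = m (m.symm x) := (m.apply_symm_apply x).symm
    have hy : y = m (m.symm y) := (m.apply_symm_apply y).symm
    rcases fin3_cases _ _ hlt with ⟨hi, hj⟩ | ⟨hi, hj⟩ | ⟨hi, hj⟩
    · rw [hx, hy, hi, hj]; exact hp.1
    · rw [hx, hy, hi, hj]; exact hp.2
    · rw [hx, hy, hi, hj]; exact hp.1.trans hp.2

end Helpers

/-- any election with at most 3 candidates is 2-Euclidean; moreover, when
there are exactly 3 candidates, any embedding of them at the vertices of a non-degenerate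
(non-collinear) scalene triangle (all pairwise distances between distinct pairs are
different) makes all `6 = 3!` regions nonempty. -/
theorem stmt_9 {C V : Type*} [Fintype C] [Fintype V]
    (pref : V → C → C → Prop) (hord : ∀ v : V, IsStrictTotalOrder C (pref v))
    (hcard : Fintype.card C ≤ 3) :
    IsEuclidean2 pref ∧
    (Fintype.card C = 3 → ∀ γ : C → Plane, Function.Injective γ →
      ¬ Collinear ℝ (Set.range γ) →
      (∀ a b c d : C, a ≠ b → c ≠ d → ({a, b} : Set C) ≠ ({c, d} : Set C) →
        dist (γ a) (γ b) ≠ dist (γ c) (γ d)) →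
      ∀ σ : C ≃ Fin 3, (region γ σ).Nonempty) := by
  refine ⟨part1 pref hord hcard, ?_⟩
  intro h3 γ hγ hcol _ σ
  exact region_nonempty_main h3 γ hcol σ
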